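/- Let s = p/q be a rational number written in lowest terms (p, q coprime integers, q ≥ 1). If 8s⁸ ∈ Λ(s), then q = 1 or q = 2; equivalently, every rational s that is neither an integer nor a half-integer satisfies 8s⁸ ∉ Λ(s). -/

import Mathlib

/-- The set `Λ(s) = ℤ + 4sℤ + 2s²ℤ + 4s³ℤ + s⁴ℤ + 2s⁵ℤ + 2s⁶ℤ + 4s⁷ℤ`. -/
def Lambda (s : ℝ) : Set ℝ :=
  {x | ∃ n₀ n₁ n₂ n₃ n₄ n₅ n₆ n₇ : ℤ,
    x = (n₀ : ℝ) + 4 * n₁ * s + 2 * n₂ * s ^ 2 + 4 * n₃ * s ^ 3 + n₄ * s ^ 4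
      + 2 * n₅ * s ^ 5 + 2 * n₆ * s ^ 6 + 4 * n₇ * s ^ 7}

/-- If `s = p/q` in lowest terms (with `q ≥ 1`) and `8s⁸ ∈ Λ(s)`, then `q = 1`
or `q = 2`: every rational that is neither an integer nor a half-integer
satisfies `8s⁸ ∉ Λ(s)`. -/
theorem rational_mem_Lambda_denom (p q : ℤ) (hq : 1 ≤ q) (hcop : IsCoprime p q)
    (h : 8 * ((p : ℝ) / (q : ℝ)) ^ 8 ∈ Lambda ((p : ℝ) / (q : ℝ))) :
    q = 1 ∨ q = 2 := by
  obtain ⟨n₀, n₁, n₂, n₃, n₄, n₅, n₆, n₇, hx⟩ := h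
  have hq0 : (q : ℝ) ≠ 0 := by
    have : (0 : ℝ) < q := by exact_mod_cast hq
    linarith
  have key : (8 * p ^ 8 : ℤ) = n₀ * q ^ 8 + 4 * n₁ * p * q ^ 7 + 2 * n₂ * p ^ 2 * q ^ 6
      + 4 * n₃ * p ^ 3 * q ^ 5 + n₄ * p ^ 4 * q ^ 4 + 2 * n₅ * p ^ 5 * q ^ 3
      + 2 * n₆ * p ^ 6 * q ^ 2 + 4 * n₇ * p ^ 7 * q := by
    have hcancel : (8 * (p : ℝ) ^ 8) * (q : ℝ) ^ 28
        = (n₀ * q ^ 8 + 4 * n₁ * p * q ^ 7 + 2 * n₂ * p ^ 2 * q ^ 6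
          + 4 * n₃ * p ^ 3 * q ^ 5 + n₄ * p ^ 4 * q ^ 4 + 2 * n₅ * p ^ 5 * q ^ 3
          + 2 * n₆ * p ^ 6 * q ^ 2 + 4 * n₇ * p ^ 7 * (q : ℝ)) * (q : ℝ) ^ 28 := by
      field_simp at hx
      linear_combination (q : ℝ) ^ 28 * hx
    have h2 := mul_right_cancel₀ (pow_ne_zero 28 hq0) hcancel
    exact_mod_cast h2
  have hdvd : q ∣ 8 * p ^ 8 :=
    ⟨n₀ * q ^ 7 + 4 * n₁ * p * q ^ 6 + 2 * n₂ * p ^ 2 * q ^ 5 + 4 * n₃ * p ^ 3 * q ^ 4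
      + n₄ * p ^ 4 * q ^ 3 + 2 * n₅ * p ^ 5 * q ^ 2 + 2 * n₆ * p ^ 6 * q + 4 * n₇ * p ^ 7,
      by linear_combination key⟩
  have hq8 : q ∣ 8 := (hcop.symm.pow_right).dvd_of_dvd_mul_right hdvd
  have hqle : q ≤ 8 := Int.le_of_dvd (by norm_num) hq8
  have hq' : q = 1 ∨ q = 2 ∨ q = 4 ∨ q = 8 := by
    interval_cases q <;> first | omega | (norm_num at hq8)
  rcases hq' with rfl | rfl | rfl | rfl
  · exact Or.inl rfl
  · exact Or.inr rfl
  · exfalso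
    have h16 : (16 : ℤ) ∣ 8 * p ^ 8 :=
      ⟨4096 * n₀ + 4096 * n₁ * p + 512 * n₂ * p ^ 2 + 256 * n₃ * p ^ 3 + 16 * n₄ * p ^ 4
        + 8 * n₅ * p ^ 5 + 2 * n₆ * p ^ 6 + n₇ * p ^ 7, by linear_combination key⟩
    obtain ⟨c, hc⟩ := h16
    have hp8 : (2 : ℤ) ∣ p ^ 8 := ⟨c, by linarith⟩
    have h2p : (2 : ℤ) ∣ p := Int.Prime.dvd_pow' Nat.prime_two hp8
    have hu := hcop.isUnit_of_dvd' h2p (by norm_num : (2 : ℤ) ∣ 4)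
    rw [Int.isUnit_iff] at hu
    omega
  · exfalso
    have h16 : (16 : ℤ) ∣ 8 * p ^ 8 :=
      ⟨1048576 * n₀ + 524288 * n₁ * p + 32768 * n₂ * p ^ 2 + 8192 * n₃ * p ^ 3
        + 256 * n₄ * p ^ 4 + 64 * n₅ * p ^ 5 + 8 * n₆ * p ^ 6 + 2 * n₇ * p ^ 7,
        by linear_combination key⟩
    obtain ⟨c, hc⟩ := h16
    have hp8 : (2 : ℤ) ∣ p ^ 8 := ⟨c, by linarith⟩
    have h2p : (2 : ℤ) ∣ p := Int.Prime.dvd_pow' Nat.prime_two hp8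
    have hu := hcop.isUnit_of_dvd' h2p (by norm_num : (2 : ℤ) ∣ 8)
    rw [Int.isUnit_iff] at hu
    omega
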